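/- Let $a > 0$, $b > 0$. There exist constants $\delta_0 > 0$ and $C > 0$ such that for all $0 < \delta < \delta_0$ and all real $\omega$ with $|\omega| \le C'\delta^{1/2}$ (for a fixed constant $C' > 0$), $\left|\frac{\delta}{\omega^2 - a\delta + \mathrm{i}\, b\,\omega\,\delta}\right| \le C\, \delta^{-1/2}$. -/

import Mathlib

/-- Order of the resonance enhancement coefficient: for `a, b > 0` and every fixed
`C' > 0`, there are `δ₀ > 0` and `C > 0` such that for `0 < δ < δ₀` and real `ω`
with `|ω| ≤ C' δ^{1/2}`, `|δ / (ω² - aδ + i b ω δ)| ≤ C δ^{-1/2}`. -/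
theorem enhancement_coefficient_order (a b : ℝ) (ha : 0 < a) (hb : 0 < b)
    (C' : ℝ) (hC' : 0 < C') :
    ∃ δ₀ > 0, ∃ C > 0, ∀ δ : ℝ, 0 < δ → δ < δ₀ →
      ∀ ω : ℝ, |ω| ≤ C' * Real.sqrt δ →
        ‖(δ : ℂ) /
          (((ω ^ 2 - a * δ : ℝ) : ℂ) + Complex.I * ((b * ω * δ : ℝ) : ℂ))‖
          ≤ C / Real.sqrt δ := by
  have ha2 : (0:ℝ) < a / 2 := by linarith
  set c := min (a / 2) (b * Real.sqrt (a / 2)) with hc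
  have hc0 : 0 < c := lt_min ha2 (mul_pos hb (Real.sqrt_pos.2 ha2))
  refine ⟨1, one_pos, 1 / c, by positivity, ?_⟩
  intro δ hδ hδ1 ω hω
  set z : ℂ := ((ω ^ 2 - a * δ : ℝ) : ℂ) + Complex.I * ((b * ω * δ : ℝ) : ℂ) with hz
  have hzre : z.re = ω ^ 2 - a * δ := by simp [hz, ← Complex.ofReal_pow]
  have hzim : z.im = b * ω * δ := by simp [hz, ← Complex.ofReal_pow]
  have hsd : 0 < Real.sqrt δ := Real.sqrt_pos.2 hδ
  have hsd1 : Real.sqrt δ ≤ 1 := by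
    rw [show (1:ℝ) = Real.sqrt 1 by simp]
    exact Real.sqrt_le_sqrt (le_of_lt hδ1)
  have hsq : Real.sqrt δ * Real.sqrt δ = δ := Real.mul_self_sqrt hδ.le
  have key : c * (δ * Real.sqrt δ) ≤ ‖z‖ := by
    rcases le_or_gt (a * δ / 2) |ω ^ 2 - a * δ| with h | h
    · have h1 : |z.re| ≤ ‖z‖ := Complex.abs_re_le_norm z
      rw [hzre] at h1
      have hcle : c ≤ a / 2 := min_le_left _ _
      nlinarith [mul_le_mul_of_nonneg_right hcle (mul_pos hδ hsd).le,
        mul_le_mul_of_nonneg_left hsd1 (mul_pos ha2 hδ).le]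
    · have hω2 : a * δ / 2 ≤ ω ^ 2 := by
        rcases abs_lt.1 h with ⟨h1, h2⟩; nlinarith
      have h1 : |z.im| ≤ ‖z‖ := Complex.abs_im_le_norm z
      rw [hzim] at h1
      have hωge : Real.sqrt (a / 2) * Real.sqrt δ ≤ |ω| := by
        rw [← Real.sqrt_mul ha2.le]
        calc Real.sqrt (a / 2 * δ) ≤ Real.sqrt (ω ^ 2) :=
              Real.sqrt_le_sqrt (by linarith)
          _ = |ω| := by rw [Real.sqrt_sq_eq_abs]
      have hcle : c ≤ b * Real.sqrt (a / 2) := min_le_right _ _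
      have habs : |b * ω * δ| = b * |ω| * δ := by
        rw [abs_mul, abs_mul, abs_of_pos hb, abs_of_pos hδ]
      rw [habs] at h1
      have hs2 : 0 ≤ Real.sqrt (a / 2) := Real.sqrt_nonneg _
      nlinarith [mul_le_mul_of_nonneg_right hωge (mul_pos hb hδ).le,
        mul_le_mul_of_nonneg_right hcle (mul_pos hδ hsd).le]
  have hzpos : 0 < ‖z‖ := lt_of_lt_of_le (by positivity) key
  rw [norm_div, Complex.norm_real, Real.norm_eq_abs, abs_of_pos hδ]
  rw [div_le_div_iff₀ hzpos hsd]
  calc δ * Real.sqrt δ ≤ (‖z‖) / c := by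
        rw [le_div_iff₀ hc0]; linarith
    _ ≤ 1 / c * ‖z‖ := by rw [one_div, div_eq_inv_mul]
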